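/- (Exclusion of all points far from β*, combining local strong convexity with global convexity as in the proof of Theorem 3.) Let f : ℝ^p → ℝ be convex and twice continuously differentiable, let β* ∈ ℝ^p, r > 0 and c₁ > 0, and suppose that for every β with ‖β − β*‖₂ ≤ r and every w ∈ ℝ^p, wᵀ∇²f(β)w ≥ c₁‖w‖₂². If ‖∇f(β*)‖₂ < (c₁/2) r, then f(β) > f(β*) for every β with ‖β − β*‖₂ ≥ r. -/

import Mathlib

noncomputable section

open Set

private lemma hasDerivAt_line {p : ℕ} (βs v : EuclideanSpace ℝ (Fin p)) (t : ℝ) :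
    HasDerivAt (fun s : ℝ => βs + s • v) v t := by
  simpa using ((hasDerivAt_id t).smul_const v).const_add βs

private lemma hasDerivAt_comp_line {p : ℕ} (f : EuclideanSpace ℝ (Fin p) → ℝ)
    (hf : ContDiff ℝ 2 f) (βs v : EuclideanSpace ℝ (Fin p)) (t : ℝ) :
    HasDerivAt (fun s : ℝ => f (βs + s • v)) (fderiv ℝ f (βs + t • v) v) t := by
  have hd := (hf.differentiable two_ne_zero).differentiableAt (x := βs + t • v)
  simpa [Function.comp_def] using hd.hasFDerivAt.comp_hasDerivAt t (hasDerivAt_line βs v t)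

private lemma hasDerivAt_fderiv_comp_line {p : ℕ} (f : EuclideanSpace ℝ (Fin p) → ℝ)
    (hf : ContDiff ℝ 2 f) (βs v : EuclideanSpace ℝ (Fin p)) (t : ℝ) :
    HasDerivAt (fun s : ℝ => fderiv ℝ f (βs + s • v) v)
      (fderiv ℝ (fun x => fderiv ℝ f x) (βs + t • v) v v) t := by
  have hG : ContDiff ℝ 1 (fun x => fderiv ℝ f x) :=
    (contDiff_succ_iff_fderiv.mp (show ContDiff ℝ (1 + 1) f by norm_num; exact hf)).2.2
  have hd := (hG.differentiable one_ne_zero).differentiableAt (x := βs + t • v)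
  have h1 : HasDerivAt (fun s : ℝ => fderiv ℝ f (βs + s • v))
      (fderiv ℝ (fun x => fderiv ℝ f x) (βs + t • v) v) t := by
    simpa [Function.comp_def] using hd.hasFDerivAt.comp_hasDerivAt t (hasDerivAt_line βs v t)
  simpa [Function.comp_def] using (ContinuousLinearMap.apply ℝ ℝ v).hasFDerivAt.comp_hasDerivAt t h1

private lemma fderiv_eq_inner_gradient {p : ℕ} (f : EuclideanSpace ℝ (Fin p) → ℝ)
    (βs v : EuclideanSpace ℝ (Fin p)) :
    fderiv ℝ f βs v = @inner ℝ _ _ (gradient f βs) v := by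
  rw [gradient]
  simp [InnerProductSpace.toDual_symm_apply]

/-- Exclusion of all points far from `β*` (proof of Theorem 3): combining local strong
convexity on the ball of radius `r` with global convexity, a small gradient at `β*`
forces `f(β) > f(β*)` for every `β` with `‖β − β*‖₂ ≥ r`. -/
theorem strong_convexity_excludes_far_points
    {p : ℕ} (f : EuclideanSpace ℝ (Fin p) → ℝ)
    (hconv : ConvexOn ℝ Set.univ f) (hf : ContDiff ℝ 2 f)
    (βs : EuclideanSpace ℝ (Fin p)) (r c₁ : ℝ) (hr : 0 < r) (hc₁ : 0 < c₁)
    (hHess : ∀ β : EuclideanSpace ℝ (Fin p), ‖β - βs‖ ≤ r →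
      ∀ w : EuclideanSpace ℝ (Fin p),
        c₁ * ‖w‖ ^ 2 ≤ fderiv ℝ (fun x => fderiv ℝ f x) β w w)
    (hgrad : ‖gradient f βs‖ < c₁ / 2 * r) :
    ∀ β : EuclideanSpace ℝ (Fin p), r ≤ ‖β - βs‖ → f βs < f β := by
  intro β hβ
  have hd0 : 0 < ‖β - βs‖ := lt_of_lt_of_le hr hβ
  set t : ℝ := r / ‖β - βs‖ with ht_def
  have ht0 : 0 < t := div_pos hr hd0
  have ht1 : t ≤ 1 := (div_le_one hd0).mpr hβ
  set v : EuclideanSpace ℝ (Fin p) := t • (β - βs) with hv_def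
  have hv : ‖v‖ = r := by
    rw [hv_def, norm_smul, Real.norm_eq_abs, abs_of_pos ht0, ht_def]
    field_simp
  -- points on the segment stay in the ball of radius r
  have hmem : ∀ s ∈ Icc (0:ℝ) 1, ‖(βs + s • v) - βs‖ ≤ r := by
    intro s hs
    have : ‖(βs + s • v) - βs‖ = s * r := by
      simp [norm_smul, abs_of_nonneg hs.1, hv]
    rw [this]
    nlinarith [hs.1, hs.2]
  -- first and second derivative functions along the segment
  set g1 : ℝ → ℝ := fun u => fderiv ℝ f (βs + u • v) v - fderiv ℝ f βs v - c₁ * u * r ^ 2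
    with hg1_def
  set g : ℝ → ℝ := fun u => f (βs + u • v) - u * fderiv ℝ f βs v - c₁ / 2 * u ^ 2 * r ^ 2
    with hg_def
  have hg1' : ∀ u : ℝ, HasDerivAt g1
      (fderiv ℝ (fun x => fderiv ℝ f x) (βs + u • v) v v - c₁ * r ^ 2) u := by
    intro u
    have h1 := hasDerivAt_fderiv_comp_line f hf βs v u
    have h2 : HasDerivAt (fun u : ℝ => c₁ * u * r ^ 2) (c₁ * r ^ 2) u := by
      simpa [mul_comm, mul_assoc] using
        ((hasDerivAt_id u).const_mul c₁).mul_const (r ^ 2)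
    simpa [hg1_def] using (h1.sub_const (fderiv ℝ f βs v)).fun_sub h2
  have hg' : ∀ u : ℝ, HasDerivAt g (g1 u) u := by
    intro u
    have h1 := hasDerivAt_comp_line f hf βs v u
    have h2 : HasDerivAt (fun u : ℝ => u * fderiv ℝ f βs v) (fderiv ℝ f βs v) u := by
      simpa using (hasDerivAt_id u).mul_const (fderiv ℝ f βs v)
    have h3 : HasDerivAt (fun u : ℝ => c₁ / 2 * u ^ 2 * r ^ 2) (c₁ * u * r ^ 2) u := by
      have := (((hasDerivAt_id u).fun_pow 2).const_mul (c₁ / 2)).mul_const (r ^ 2)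
      refine this.congr_deriv ?_
      simp only [id_eq]
      push_cast
      ring
    have := (h1.fun_sub h2).fun_sub h3
    simpa [hg1_def, hg_def, sub_sub] using this
  -- g1 is nonneg on [0,1]
  have hg1nonneg : ∀ u ∈ Icc (0:ℝ) 1, 0 ≤ g1 u := by
    have hmono : MonotoneOn g1 (Icc (0:ℝ) 1) := by
      apply monotoneOn_of_deriv_nonneg (convex_Icc 0 1)
        (fun u _ => ((hg1' u).differentiableAt.continuousAt).continuousWithinAt)
        (fun u hu => ((hg1' u).differentiableAt).differentiableWithinAt)
      intro u hu
      rw [interior_Icc] at hu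
      rw [(hg1' u).deriv]
      have := hHess (βs + u • v) (hmem u ⟨hu.1.le, hu.2.le⟩) v
      rw [hv] at this
      linarith
    intro u hu
    have h0 : g1 0 = 0 := by simp [hg1_def]
    have := hmono (left_mem_Icc.mpr zero_le_one) hu hu.1
    linarith [h0 ▸ this]
  -- hence g is monotone on [0,1], so g 1 ≥ g 0
  have hgmono : MonotoneOn g (Icc (0:ℝ) 1) := by
    apply monotoneOn_of_deriv_nonneg (convex_Icc 0 1)
      (fun u _ => ((hg' u).differentiableAt.continuousAt).continuousWithinAt)
      (fun u hu => ((hg' u).differentiableAt).differentiableWithinAt)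
    intro u hu
    rw [interior_Icc] at hu
    rw [(hg' u).deriv]
    exact hg1nonneg u ⟨hu.1.le, hu.2.le⟩
  have hkey : f βs + fderiv ℝ f βs v + c₁ / 2 * r ^ 2 ≤ f (βs + v) := by
    have := hgmono (left_mem_Icc.mpr zero_le_one) (right_mem_Icc.mpr zero_le_one) zero_le_one
    simp only [hg_def, zero_smul, add_zero, one_smul, one_pow, one_mul] at this
    linarith
  -- bound the gradient term
  have hinner : -(c₁ / 2 * r ^ 2) < fderiv ℝ f βs v := by
    rw [fderiv_eq_inner_gradient]
    have h1 : -(‖gradient f βs‖ * ‖v‖) ≤ @inner ℝ _ _ (gradient f βs) v :=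
      neg_le_of_abs_le (abs_real_inner_le_norm _ _)
    have h2 : ‖gradient f βs‖ * ‖v‖ < c₁ / 2 * r ^ 2 := by
      rw [hv]
      nlinarith
    linarith
  have hmid : f βs < f (βs + v) := by linarith
  -- global convexity
  have hcomb : f (βs + v) ≤ (1 - t) * f βs + t * f β := by
    have := hconv.2 (mem_univ βs) (mem_univ β) (by linarith : (0:ℝ) ≤ 1 - t) ht0.le
      (by ring : (1 - t) + t = 1)
    have heq : (1 - t) • βs + t • β = βs + v := by
      rw [hv_def]
      module
    rwa [heq] at this
  have : t * f βs < t * f β := by nlinarith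
  exact lt_of_mul_lt_mul_left this ht0.le
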